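/- Let D be the derivation of ℂ[x,y] with D(x) = 1 and D(y) = 2x³y − 2x⁶ + 3x² + 2x, and let σ be the ℂ-algebra automorphism of ℂ[x,y] with σ(x) = −x and σ(y) = y − 2x³. Then σ is an involution (σ ∘ σ = id) and σ ∘ D ∘ σ = −D; in particular the order-two automorphism σ preserves the foliation defined by D. -/

import Mathlib

open MvPolynomial

/-- The polynomial ring `ℂ[x,y]`. -/
abbrev Rxy : Type := MvPolynomial (Fin 2) ℂ

/-- For the derivation `D = ∂x + (2x³y − 2x⁶ + 3x² + 2x) ∂y` and the automorphism
`σ : (x,y) ↦ (−x, y − 2x³)`, `σ` is an involution and `σ ∘ D ∘ σ = −D`: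
the order-two automorphism `σ` preserves the foliation defined by `D`. -/
theorem involution_preserves_example (D : Derivation ℂ Rxy Rxy)
    (hDx : D (X 0) = 1)
    (hDy : D (X 1) = 2 * X 0 ^ 3 * X 1 - 2 * X 0 ^ 6 + 3 * X 0 ^ 2 + 2 * X 0)
    (σ : Rxy ≃ₐ[ℂ] Rxy)
    (hσx : σ (X 0) = -X 0) (hσy : σ (X 1) = X 1 - 2 * X 0 ^ 3) :
    (∀ a : Rxy, σ (σ a) = a) ∧ (∀ a : Rxy, σ (D (σ a)) = -(D a)) := by
  have hinv : ∀ a : Rxy, σ (σ a) = a := by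
    have h : (σ.toAlgHom.comp σ.toAlgHom) = AlgHom.id ℂ Rxy := by
      apply MvPolynomial.algHom_ext
      intro i
      fin_cases i <;>
        simp [hσx, hσy, map_sub, map_mul, map_pow, map_ofNat] <;> ring
    intro a
    simpa using AlgHom.congr_fun h a
  refine ⟨hinv, ?_⟩
  let D' : Derivation ℂ Rxy Rxy :=
  { toFun := fun a => σ (D (σ a))
    map_add' := by intro a b; simp
    map_smul' := by intro c a; simp
    map_one_eq_zero' := by simp
    leibniz' := by
      intro a b
      show σ (D (σ (a * b))) = a • σ (D (σ b)) + b • σ (D (σ a))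
      rw [map_mul, Derivation.leibniz, map_add]
      simp only [smul_eq_mul, map_mul, hinv] }
  have h3 : D ((X 0 : Rxy) ^ 3) = 3 * X 0 ^ 2 := by
    have : ((X 0 : Rxy) ^ 3) = X 0 * X 0 * X 0 := by ring
    rw [this]
    simp only [Derivation.leibniz, hDx, smul_eq_mul]
    ring
  have hkey : D (X 1 - 2 * X 0 ^ 3 : Rxy) =
      2 * X 0 ^ 3 * X 1 - 2 * X 0 ^ 6 - 3 * X 0 ^ 2 + 2 * X 0 := by
    have h2 : (2 * X 0 ^ 3 : Rxy) = X 0 ^ 3 + X 0 ^ 3 := by ring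
    rw [map_sub, h2, map_add, h3, hDy]
    ring
  have hext : D' = -D := by
    apply MvPolynomial.derivation_ext
    intro i
    fin_cases i
    · show σ (D (σ (X 0))) = -D (X 0)
      rw [hσx, map_neg, hDx, map_neg, map_one]
    · show σ (D (σ (X 1))) = -D (X 1)
      rw [hσy, hkey]
      simp only [map_sub, map_add, map_mul, map_pow, hσx, hσy, map_ofNat, hDy]
      ring
  intro a
  have := congrArg (fun (E : Derivation ℂ Rxy Rxy) => E a) hext
  simp only [Derivation.neg_apply] at this
  exact this
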